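/- Let R = k[z_1,...,z_{d+2}] be the Cox ring of the smooth Picard-rank-2 toric variety X_d(a) for a = (a_1,...,a_s) with 0 ≤ a_1 ≤ ... ≤ a_s, graded by deg(z_i) = (−a_i, 1) for 1 ≤ i ≤ s, deg(z_{s+1}) = (0,1), and deg(z_i) = (1,0) for s+2 ≤ i ≤ d+2. Then every monomial of R of degree (b_1, b_2) ∈ ℕ^2 is a product of b_1 monomials of degree (1,0) and b_2 monomials of degree (0,1). Consequently, with n = dim_k R_{(1,0)} − 1 and m = dim_k R_{(0,1)} − 1 and S = Cox(P^n × P^m), the k-algebra map ψ : S → ⊕_{b ∈ ℕ^2} R_b sending the degree-(1,0) variables of S bijectively to the monomial basis of R_{(1,0)} and the degree-(0,1) variables to the monomial basis of R_{(0,1)} is surjective. -/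

import Mathlib

open MvPolynomial

namespace Gotzmann

/-- Variable index set for the Cox ring of `P^{n 0} × ... × P^{n (s-1)}`:
the variable `x_{i,j}` is `⟨i, j⟩`. -/
abbrev PPVar (s : ℕ) (n : Fin s → ℕ) : Type := Σ i : Fin s, Fin (n i + 1)

/-- The multidegree of the variable `x_{i,j}` is the standard basis vector `e_i ∈ ℤ^s` (here
realised in `ℕ^s`). -/
def ppw (s : ℕ) (n : Fin s → ℕ) : PPVar s n → (Fin s → ℕ) :=
  fun v => Pi.single v.1 1

/-- Weighted degree of an exponent vector. -/
def wdeg {σ M : Type*} [AddCommMonoid M] (w : σ → M) (u : σ →₀ ℕ) : M :=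
  u.sum fun v e => e • w v

/-- Multigraded Hilbert function of `S/I` in degree `b`: the dimension of the image of the
degree-`b` part of `S` in `S/I`. -/
noncomputable def hilb (k : Type*) [Field k] {σ M : Type*} [AddCommMonoid M]
    (w : σ → M) (I : Ideal (MvPolynomial σ k)) (b : M) : ℕ :=
  Module.finrank k ((weightedHomogeneousSubmodule k w b).map
    (Ideal.Quotient.mkₐ k I).toLinearMap)

/-- An ideal homogeneous with respect to the grading by `w`. -/
def IsHomog {k : Type*} [Field k] {σ M : Type*} [AddCommMonoid M]
    (w : σ → M) (I : Ideal (MvPolynomial σ k)) : Prop :=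
  ∃ G : Set (MvPolynomial σ k),
    (∀ f ∈ G, ∃ d : M, f.IsWeightedHomogeneous w d) ∧ I = Ideal.span G

/-- A monomial ideal. -/
def IsMonomialIdeal {k : Type*} [Field k] {σ : Type*} (I : Ideal (MvPolynomial σ k)) : Prop :=
  ∃ A : Set (σ →₀ ℕ), I = Ideal.span ((fun u => (monomial u (1 : k))) '' A)

/-- Generated in degrees componentwise at most `a`. -/
def GenInDegLE {k : Type*} [Field k] {σ : Type*} {s : ℕ}
    (w : σ → (Fin s → ℕ)) (I : Ideal (MvPolynomial σ k)) (a : Fin s → ℕ) : Prop :=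
  ∃ G : Set (MvPolynomial σ k), I = Ideal.span G ∧
    ∀ f ∈ G, ∃ d : Fin s → ℕ, f.IsWeightedHomogeneous w d ∧ ∀ i, d i ≤ a i

/-- Generated in degrees at most `a` for the standard grading. -/
def GenInDegLE1 {k : Type*} [Field k] {σ : Type*}
    (I : Ideal (MvPolynomial σ k)) (a : ℕ) : Prop :=
  ∃ G : Set (MvPolynomial σ k), I = Ideal.span G ∧
    ∀ f ∈ G, ∃ d : ℕ, f.IsWeightedHomogeneous (fun _ : σ => (1 : ℕ)) d ∧ d ≤ a

/-- `P` is the (multigraded) Hilbert polynomial of `I`: it agrees with the Hilbert function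
for all multidegrees sufficiently deep in `ℕ^s`. -/
def IsHilbPoly (k : Type*) [Field k] {σ : Type*} {s : ℕ}
    (w : σ → (Fin s → ℕ)) (I : Ideal (MvPolynomial σ k))
    (P : MvPolynomial (Fin s) ℚ) : Prop :=
  ∃ N : ℕ, ∀ b : Fin s → ℕ, (∀ i, N ≤ b i) →
    eval (fun i => (b i : ℚ)) P = (hilb k w I b : ℚ)

/-- `P` is the Hilbert polynomial of the standard-graded ideal `I`. -/
def IsHilbPoly1 (k : Type*) [Field k] {σ : Type*}
    (I : Ideal (MvPolynomial σ k)) (P : Polynomial ℚ) : Prop :=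
  ∃ N : ℕ, ∀ b : ℕ, N ≤ b →
    P.eval (b : ℚ) = (hilb k (fun _ : σ => (1 : ℕ)) I b : ℚ)

/-- Hilbert polynomial for a `ℤ^s`-graded ring, agreement deep in `ℕ^s ⊆ ℤ^s`. -/
def IsHilbPolyZ (k : Type*) [Field k] {σ : Type*} {s : ℕ}
    (w : σ → (Fin s → ℤ)) (I : Ideal (MvPolynomial σ k))
    (P : MvPolynomial (Fin s) ℚ) : Prop :=
  ∃ N : ℕ, ∀ b : Fin s → ℕ, (∀ i, N ≤ b i) →
    eval (fun i => (b i : ℚ)) P = (hilb k w I (fun i => (b i : ℤ)) : ℚ)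

/-- A strongly multistable (monomial) ideal. -/
def StronglyMultistable {k : Type*} [Field k] {s : ℕ} {n : Fin s → ℕ}
    (I : Ideal (MvPolynomial (PPVar s n) k)) : Prop :=
  IsMonomialIdeal I ∧
    ∀ u : PPVar s n →₀ ℕ, (monomial u (1 : k)) ∈ I →
      ∀ (i : Fin s) (j j' : Fin (n i + 1)), j' < j → u ⟨i, j⟩ ≠ 0 →
        (monomial (u - Finsupp.single ⟨i, j⟩ 1 + Finsupp.single ⟨i, j'⟩ 1) (1 : k)) ∈ I

/-- A strongly multistable set of exponent vectors. -/
def StronglyMultistableSet {s : ℕ} {n : Fin s → ℕ} (M : Set (PPVar s n →₀ ℕ)) : Prop :=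
  ∀ u ∈ M, ∀ (i : Fin s) (j j' : Fin (n i + 1)), j' < j → u ⟨i, j⟩ ≠ 0 →
    u - Finsupp.single ⟨i, j⟩ 1 + Finsupp.single ⟨i, j'⟩ 1 ∈ M

/-- The part of an exponent vector supported on block `i`. -/
noncomputable def blockPart {s : ℕ} {n : Fin s → ℕ} (i : Fin s) (u : PPVar s n →₀ ℕ) :
    PPVar s n →₀ ℕ := u.filter fun v => v.1 = i

/-- The part of an exponent vector supported off block `i`. -/
noncomputable def offBlock {s : ℕ} {n : Fin s → ℕ} (i : Fin s) (u : PPVar s n →₀ ℕ) :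
    PPVar s n →₀ ℕ := u.filter fun v => v.1 ≠ i

/-- Exponent vectors supported on block `i` of total degree `d`
(monomials of degree `d·e_i`). -/
def blockMon {s : ℕ} {n : Fin s → ℕ} (i : Fin s) (d : ℕ) : Set (PPVar s n →₀ ℕ) :=
  {p | (∀ v ∈ p.support, v.1 = i) ∧ p.sum (fun _ e => e) = d}

/-- `blockLt i u v` : the block-`i` monomial of `v` is strictly larger than that of `u` in the
lexicographic order with `x_{i,0} ≻ x_{i,1} ≻ ⋯`. -/
def blockLt {s : ℕ} {n : Fin s → ℕ} (i : Fin s) (u v : PPVar s n →₀ ℕ) : Prop :=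
  Pi.Lex (· < ·) (fun {_} => (· < ·)) (fun j => u ⟨i, j⟩) (fun j => v ⟨i, j⟩)

/-- `M` is an `x_i`-lex set: replacing the block-`i` part of a member by any lexicographically
larger monomial of the same degree stays in `M`. -/
def IsXiLex {s : ℕ} {n : Fin s → ℕ} (i : Fin s) (M : Set (PPVar s n →₀ ℕ)) : Prop :=
  ∀ u ∈ M, ∀ p' : PPVar s n →₀ ℕ,
    (∀ v ∈ p'.support, v.1 = i) →
    p'.sum (fun _ e => e) = (blockPart i u).sum (fun _ e => e) →
    blockLt i (blockPart i u) p' →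
    offBlock i u + p' ∈ M

/-- The initial lexsegment of size `c` among block-`i` monomials of degree `d`. -/
noncomputable def lexSeg {s : ℕ} {n : Fin s → ℕ} (i : Fin s) (d c : ℕ) :
    Set (PPVar s n →₀ ℕ) :=
  {p ∈ blockMon i d | (blockMon (n := n) i d ∩ {p' | blockLt i p p'}).ncard < c}

/-- The operation `M ↦ M^{x_i lex}`: in each fibre over a fixed off-block-`i` part, replace the
set of block-`i` parts by the initial lexsegment of the same cardinality. -/
noncomputable def xiLexify {s : ℕ} {n : Fin s → ℕ} (i : Fin s)
    (M : Set (PPVar s n →₀ ℕ)) : Set (PPVar s n →₀ ℕ) :=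
  {w | ∃ u ∈ M, offBlock i w = offBlock i u ∧
        blockPart i w ∈ lexSeg i ((blockPart i u).sum fun _ e => e)
          ({p | p ∈ blockMon i ((blockPart i u).sum fun _ e => e) ∧
              offBlock i u + p ∈ M}).ncard}

/-- Successively apply `M ↦ M^{x_i lex}` for the first `t` blocks. -/
noncomputable def lexifyUpTo {s : ℕ} {n : Fin s → ℕ} (M : Set (PPVar s n →₀ ℕ)) :
    ℕ → Set (PPVar s n →₀ ℕ)
  | 0 => M
  | t + 1 => if h : t < s then xiLexify ⟨t, h⟩ (lexifyUpTo M t) else lexifyUpTo M t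

/-- `M^{multilex} = M^{x_1 lex ⋯ x_s lex}`. -/
noncomputable def multilexify {s : ℕ} {n : Fin s → ℕ} (M : Set (PPVar s n →₀ ℕ)) :
    Set (PPVar s n →₀ ℕ) := lexifyUpTo M s

/-- The exponent vectors of the monomials of `I` of multidegree `a`. -/
def monomialsOf {k : Type*} [Field k] {s : ℕ} {n : Fin s → ℕ}
    (I : Ideal (MvPolynomial (PPVar s n) k)) (a : Fin s → ℕ) : Set (PPVar s n →₀ ℕ) :=
  {u | wdeg (ppw s n) u = a ∧ (monomial u (1 : k)) ∈ I}

/-- A multilex (monomial) ideal. -/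
def IsMultilexIdeal {k : Type*} [Field k] {s : ℕ} {n : Fin s → ℕ}
    (I : Ideal (MvPolynomial (PPVar s n) k)) : Prop :=
  IsMonomialIdeal I ∧ ∀ (a : Fin s → ℕ) (i : Fin s), IsXiLex i (monomialsOf I a)

/-- `κ` encodes the `d`-th Macaulay representation of `α`:
`α = C(κ(d),d) + ⋯ + C(κ(1),1)` with `κ(d) > ⋯ > κ(1) ≥ 0`; here `κ j` is the paper's
`κ(j+1)`. -/
def IsMacaulayRep (d α : ℕ) (κ : Fin d → ℕ) : Prop :=
  StrictMono κ ∧ α = ∑ j : Fin d, Nat.choose (κ j) ((j : ℕ) + 1)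

/-- The Macaulay bound `α^{⟨d⟩}`. -/
noncomputable def macaulayBound (d α : ℕ) : ℕ :=
  letI := Classical.propDecidable (∃ κ : Fin d → ℕ, IsMacaulayRep d α κ)
  if h : ∃ κ : Fin d → ℕ, IsMacaulayRep d α κ
  then ∑ j : Fin d, Nat.choose (h.choose j + 1) ((j : ℕ) + 2)
  else 0

/-- Maximal growth of a Hilbert function in one direction: with
`H u = C(nv+u, nv)·q(u) + r(u)` the Euclidean division, `H (u+1) = C(nv+u+1,nv)·q(u) + r(u)^⟨u⟩`. -/
def growthStep (nv : ℕ) (H : ℕ → ℕ) (u : ℕ) : Prop :=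
  H (u + 1) =
    (nv + u + 1).choose nv * (H u / (nv + u).choose nv)
      + macaulayBound u (H u % (nv + u).choose nv)

/-- Hilbert polynomial for a `ℤ^s`-graded Cox ring, with agreement sufficiently far into the nef
cone, parameterised by nef classes `c i`. -/
def IsHilbPolyNef (k : Type*) [Field k] {σ : Type*} {s : ℕ}
    (w : σ → (Fin s → ℤ)) (c : Fin s → (Fin s → ℤ))
    (I : Ideal (MvPolynomial σ k)) (P : MvPolynomial (Fin s) ℚ) : Prop :=
  ∃ N : ℕ, ∀ b : Fin s → ℕ, (∀ i, N ≤ b i) →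
    eval (fun j => ((∑ i, (b i : ℤ) * c i j : ℤ) : ℚ)) P
      = (hilb k w I (fun j => ∑ i, (b i : ℤ) * c i j) : ℚ)

/-- The `ℤ²`-grading of the Cox ring of Kleinschmidt's Picard-rank-2 toric variety `X_d(a)`:
`deg z_i = (-a_i, 1)` for `1 ≤ i ≤ s`, `deg z_{s+1} = (0,1)`, `deg z_i = (1,0)` otherwise
(indices here are `0`-based). -/
def kw (d s : ℕ) (a : Fin s → ℕ) : Fin (d + 2) → (Fin 2 → ℤ) :=
  fun i => if h : (i : ℕ) < s then ![-(a ⟨i, h⟩ : ℤ), 1]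
    else if (i : ℕ) = s then ![0, 1] else ![1, 0]

lemma wdeg_zero {σ M : Type*} [AddCommMonoid M] (w : σ → M) : wdeg w 0 = 0 :=
  Finsupp.sum_zero_index

lemma wdeg_add {σ M : Type*} [AddCommMonoid M] (w : σ → M) (u v : σ →₀ ℕ) :
    wdeg w (u + v) = wdeg w u + wdeg w v :=
  Finsupp.sum_add_index' (fun _ => zero_smul _ _) (fun _ _ _ => add_smul _ _ _)

lemma wdeg_single {σ M : Type*} [AddCommMonoid M] (w : σ → M) (i : σ) :
    wdeg w (Finsupp.single i 1) = w i := by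
  unfold wdeg
  rw [Finsupp.sum_single_index, one_smul]
  exact zero_smul _ _

lemma wdeg_sum {σ M ι : Type*} [AddCommMonoid M] (w : σ → M) (t : Finset ι)
    (f : ι → σ →₀ ℕ) : wdeg w (∑ p ∈ t, f p) = ∑ p ∈ t, wdeg w (f p) := by
  classical
  induction t using Finset.cons_induction with
  | empty => simp [wdeg_zero]
  | cons i t hi ih => rw [Finset.sum_cons, Finset.sum_cons, wdeg_add, ih]

lemma wdeg_fintype {σ M : Type*} [Fintype σ] [AddCommMonoid M] (w : σ → M) (u : σ →₀ ℕ) :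
    wdeg w u = ∑ i : σ, u i • w i :=
  Finsupp.sum_fintype _ _ (fun i => zero_smul _ _)

lemma kw_lt {d s : ℕ} (a : Fin s → ℕ) (i : Fin (d+2)) (h : (i:ℕ) < s) :
    kw d s a i = ![-(a ⟨i, h⟩ : ℤ), 1] := by simp [kw, h]

lemma kw_eq {d s : ℕ} (a : Fin s → ℕ) (i : Fin (d+2)) (h : (i:ℕ) = s) :
    kw d s a i = ![0, 1] := by simp [kw, h]

lemma kw_gt {d s : ℕ} (a : Fin s → ℕ) (i : Fin (d+2)) (h : s < (i:ℕ)) :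
    kw d s a i = ![1, 0] := by
  have h1 : ¬ (i:ℕ) < s := by omega
  have h2 : ¬ (i:ℕ) = s := by omega
  simp [kw, h1, h2]


lemma sum_eq_total {σ : Type*} (u : σ →₀ ℕ) :
    (u.sum fun _ e => e) = ∑ i ∈ u.support, u i := rfl

lemma exists_singles {σ : Type*} [DecidableEq σ] :
    ∀ (N : ℕ) (u : σ →₀ ℕ), (u.sum fun _ e => e) = N →
    ∃ f : Fin N → σ, (∀ p, f p ∈ u.support) ∧ u = ∑ p, Finsupp.single (f p) 1 := by
  intro N
  induction N with
  | zero =>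
    intro u hu
    have hz : u = 0 := by
      ext i
      simp only [Finsupp.coe_zero, Pi.zero_apply]
      by_contra hi
      have hmem : i ∈ u.support := Finsupp.mem_support_iff.2 hi
      have h1 : u i ≤ ∑ j ∈ u.support, u j :=
        Finset.single_le_sum (fun _ _ => Nat.zero_le _) hmem
      rw [← sum_eq_total, hu] at h1
      omega
    exact ⟨Fin.elim0, fun p => p.elim0, by simp [hz]⟩
  | succ n ih =>
    intro u hu
    have hne : u ≠ 0 := by
      rintro rfl; simp [Finsupp.sum_zero_index] at hu
    obtain ⟨i, hi⟩ : ∃ i, u i ≠ 0 := by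
      by_contra h; push_neg at h; exact hne (Finsupp.ext h)
    have hle : Finsupp.single i 1 ≤ u := by
      rw [Finsupp.single_le_iff]; omega
    set u' := u - Finsupp.single i 1 with hu'
    have hsplit : u' + Finsupp.single i 1 = u := tsub_add_cancel_of_le hle
    have hsum' : (u'.sum fun _ e => e) = n := by
      have h2 : ((u' + Finsupp.single i 1).sum fun _ e => e) = n + 1 := by
        rw [hsplit]; exact hu
      rw [Finsupp.sum_add_index' (fun _ => rfl) (fun _ _ _ => rfl),
        Finsupp.sum_single_index rfl] at h2
      omega
    obtain ⟨f', hf'supp, hf'⟩ := ih u' hsum'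
    refine ⟨Fin.cons i f', ?_, ?_⟩
    · intro p
      refine Fin.cases ?_ ?_ p
      · simpa using hi
      · intro q
        simp only [Fin.cons_succ]
        have hq := hf'supp q
        rw [Finsupp.mem_support_iff] at hq ⊢
        intro h0
        apply hq
        rw [hu', Finsupp.tsub_apply, h0]
        simp
    · rw [Fin.sum_univ_succ]
      simp only [Fin.cons_zero, Fin.cons_succ]
      rw [← hf', ← hsplit, add_comm]

lemma extract {σ : Type*} [Fintype σ] [DecidableEq σ] (P : σ → Prop) [DecidablePred P] :
    ∀ (m : ℕ) (u : σ →₀ ℕ), m ≤ (∑ j, if P j then u j else 0) →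
    ∃ v : σ →₀ ℕ, v ≤ u ∧ (∀ j, v j ≠ 0 → P j) ∧ (v.sum fun _ e => e) = m := by
  intro m
  induction m with
  | zero =>
    intro u _
    exact ⟨0, zero_le, by simp, Finsupp.sum_zero_index⟩
  | succ m ih =>
    intro u hu
    obtain ⟨v, hvu, hvP, hvs⟩ := ih u (le_trans (Nat.le_succ m) hu)
    obtain ⟨j, hPj, hjlt⟩ : ∃ j, P j ∧ v j < u j := by
      by_contra h
      push_neg at h
      have hle : ∑ j, (if P j then u j else 0) ≤ ∑ j, (if P j then v j else 0) := by
        apply Finset.sum_le_sum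
        intro j _
        split_ifs with hPj
        · exact h j hPj
        · exact le_refl 0
      have hle2 : ∑ j, (if P j then v j else 0) ≤ ∑ j, v j := by
        apply Finset.sum_le_sum
        intro j _
        split_ifs
        · exact le_refl _
        · exact Nat.zero_le _
      have htot : ∑ j, v j = m := by
        rw [← hvs, Finsupp.sum_fintype]
        intro; rfl
      omega
    refine ⟨v + Finsupp.single j 1, ?_, ?_, ?_⟩
    · rw [Finsupp.le_def]
      intro j'
      rw [Finsupp.add_apply]
      rcases eq_or_ne j' j with rfl | hne
      · rw [Finsupp.single_eq_same]; omega
      · rw [Finsupp.single_eq_of_ne' (Ne.symm hne)]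
        have := Finsupp.le_def.1 hvu j'
        omega
    · intro j' hj'
      rw [Finsupp.add_apply] at hj'
      rcases eq_or_ne j' j with rfl | hne
      · exact hPj
      · rw [Finsupp.single_eq_of_ne' (Ne.symm hne)] at hj'
        exact hvP j' (by omega)
    · rw [Finsupp.sum_add_index' (fun _ => rfl) (fun _ _ _ => rfl),
        Finsupp.sum_single_index rfl, hvs]


lemma wdeg_kw_apply (d s : ℕ) (a : Fin s → ℕ) (u : Fin (d+2) →₀ ℕ) (j : Fin 2) :
    wdeg (kw d s a) u j = ∑ i : Fin (d+2), (u i : ℤ) * (kw d s a i j) := by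
  rw [wdeg_fintype, Finset.sum_apply]
  apply Finset.sum_congr rfl
  intro i _
  rw [Pi.smul_apply, nsmul_eq_mul]

lemma wdeg_kw_one (d s : ℕ) (a : Fin s → ℕ) (u : Fin (d+2) →₀ ℕ) :
    wdeg (kw d s a) u 1 = ((∑ i : Fin (d+2), if (i:ℕ) ≤ s then u i else 0 : ℕ) : ℤ) := by
  rw [wdeg_kw_apply, Nat.cast_sum]
  apply Finset.sum_congr rfl
  intro i _
  rcases lt_trichotomy (i:ℕ) s with h | h | h
  · rw [kw_lt a i h, if_pos (le_of_lt h)]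
    simp
  · rw [kw_eq a i h, if_pos (le_of_eq h)]
    simp
  · rw [kw_gt a i h, if_neg (by omega)]
    simp

lemma wdeg_kw_zero (d s : ℕ) (a : Fin s → ℕ) (u : Fin (d+2) →₀ ℕ) :
    wdeg (kw d s a) u 0 = ((∑ i : Fin (d+2), if s < (i:ℕ) then u i else 0 : ℕ) : ℤ)
      - ∑ i : Fin (d+2), (u i : ℤ) * (if h : (i:ℕ) < s then (a ⟨i,h⟩ : ℤ) else 0) := by
  rw [wdeg_kw_apply, Nat.cast_sum, ← Finset.sum_sub_distrib]
  apply Finset.sum_congr rfl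
  intro i _
  rcases lt_trichotomy (i:ℕ) s with h | h | h
  · rw [kw_lt a i h, if_neg (by omega), dif_pos h]
    simp [mul_comm]
  · rw [kw_eq a i h, if_neg (by omega), dif_neg (by omega)]
    simp
  · rw [kw_gt a i h, if_pos h, dif_neg (by omega)]
    simp

lemma decomp (d s : ℕ) (a : Fin s → ℕ) :
    ∀ (b1 b0 : ℕ) (u : Fin (d + 2) →₀ ℕ),
      wdeg (kw d s a) u = ![(b0:ℤ), (b1:ℤ)] →
      ∃ (f : Fin b0 → (Fin (d + 2) →₀ ℕ)) (g : Fin b1 → (Fin (d + 2) →₀ ℕ)),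
        (∀ p, wdeg (kw d s a) (f p) = ![(1:ℤ), 0]) ∧
        (∀ q, wdeg (kw d s a) (g q) = ![(0:ℤ), 1]) ∧
        u = (∑ p, f p) + ∑ q, g q := by
  intro b1
  induction b1 with
  | zero =>
    intro b0 u hdeg
    have E1 : (∑ i : Fin (d+2), if (i:ℕ) ≤ s then u i else 0) = 0 := by
      have := wdeg_kw_one d s a u
      rw [hdeg] at this
      simp only [Matrix.cons_val_one, Matrix.head_cons, Matrix.cons_val_zero, Nat.cast_zero] at this
      exact_mod_cast this.symm
    have hz : ∀ i : Fin (d+2), (i:ℕ) ≤ s → u i = 0 := by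
      intro i hi
      have := (Finset.sum_eq_zero_iff.1 E1) i (Finset.mem_univ i)
      rwa [if_pos hi] at this
    have E0 : ((∑ i : Fin (d+2), if s < (i:ℕ) then u i else 0 : ℕ) : ℤ) = b0 := by
      have h := wdeg_kw_zero d s a u
      rw [hdeg] at h
      simp only [Matrix.cons_val_zero] at h
      have hB : (∑ i : Fin (d+2), (u i : ℤ) *
          (if h : (i:ℕ) < s then (a ⟨i,h⟩ : ℤ) else 0)) = 0 := by
        apply Finset.sum_eq_zero
        intro i _
        by_cases hi : (i:ℕ) < s
        · rw [hz i (le_of_lt hi)]; simp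
        · rw [dif_neg hi, mul_zero]
      rw [hB, sub_zero] at h
      omega
    have htot : (u.sum fun _ e => e) = b0 := by
      have : (u.sum fun _ e => e) = ∑ i : Fin (d+2), if s < (i:ℕ) then u i else 0 := by
        rw [Finsupp.sum_fintype _ _ (fun _ => rfl)]
        apply Finset.sum_congr rfl
        intro i _
        by_cases hi : s < (i:ℕ)
        · rw [if_pos hi]
        · rw [if_neg hi, hz i (by omega)]
      rw [this]
      exact_mod_cast E0
    obtain ⟨f, hfsupp, hfeq⟩ := exists_singles b0 u htot
    refine ⟨fun p => Finsupp.single (f p) 1, Fin.elim0, ?_, fun q => q.elim0, ?_⟩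
    · intro p
      have hmem := hfsupp p
      rw [Finsupp.mem_support_iff] at hmem
      have hgt : s < ((f p):ℕ) := by
        by_contra h
        exact hmem (hz (f p) (by omega))
      rw [wdeg_single, kw_gt a (f p) hgt]
    · simpa using hfeq
  | succ n ih =>
    intro b0 u hdeg
    -- find i ≤ s with u i ≠ 0
    have E1 : (∑ i : Fin (d+2), if (i:ℕ) ≤ s then u i else 0) = n + 1 := by
      have := wdeg_kw_one d s a u
      rw [hdeg] at this
      simp only [Matrix.cons_val_one, Matrix.head_cons, Matrix.cons_val_zero] at this
      exact_mod_cast this.symm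
    obtain ⟨i, his, hi0⟩ : ∃ i : Fin (d+2), (i:ℕ) ≤ s ∧ u i ≠ 0 := by
      by_contra h
      push_neg at h
      have : (∑ i : Fin (d+2), if (i:ℕ) ≤ s then u i else 0) = 0 := by
        apply Finset.sum_eq_zero
        intro i _
        by_cases hi : (i:ℕ) ≤ s
        · rw [if_pos hi, h i hi]
        · rw [if_neg hi]
      omega
    set m : ℕ := if h : (i:ℕ) < s then a ⟨i, h⟩ else 0 with hm
    -- m ≤ number of base variables
    have hmS : m ≤ ∑ j : Fin (d+2), if s < (j:ℕ) then u j else 0 := by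
      have h := wdeg_kw_zero d s a u
      rw [hdeg] at h
      simp only [Matrix.cons_val_zero] at h
      have hterm : (m : ℤ) ≤ ∑ j : Fin (d+2), (u j : ℤ) *
          (if h : (j:ℕ) < s then (a ⟨j,h⟩ : ℤ) else 0) := by
        have hsingle : (m : ℤ) ≤ (u i : ℤ) *
            (if h : (i:ℕ) < s then (a ⟨i,h⟩ : ℤ) else 0) := by
          by_cases hi : (i:ℕ) < s
          · rw [hm, dif_pos hi, dif_pos hi]
            have : (1:ℤ) ≤ (u i : ℤ) := by exact_mod_cast Nat.one_le_iff_ne_zero.2 hi0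
            nlinarith [Int.natCast_nonneg (a ⟨i, hi⟩)]
          · rw [hm, dif_neg hi, dif_neg hi, mul_zero]
            simp
        refine le_trans hsingle ?_
        apply Finset.single_le_sum (f := fun j : Fin (d+2) => (u j : ℤ) *
          (if h : (j:ℕ) < s then (a ⟨j,h⟩ : ℤ) else 0)) ?_ (Finset.mem_univ i)
        intro j _
        by_cases hj : (j:ℕ) < s
        · rw [dif_pos hj]; positivity
        · rw [dif_neg hj, mul_zero]
      have : (m:ℤ) ≤ ((∑ j : Fin (d+2), if s < (j:ℕ) then u j else 0 : ℕ) : ℤ) := by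
        have hb0 : (0:ℤ) ≤ (b0:ℤ) := Int.natCast_nonneg b0
        omega
      exact_mod_cast this
    -- split off single i
    have hle1 : Finsupp.single i 1 ≤ u := by rw [Finsupp.single_le_iff]; omega
    set u' := u - Finsupp.single i 1 with hu'
    have hu'app : ∀ j : Fin (d+2), s < (j:ℕ) → u' j = u j := by
      intro j hj
      have hij : i ≠ j := by intro hij; rw [hij] at his; omega
      rw [hu', Finsupp.tsub_apply, Finsupp.single_eq_of_ne' hij, Nat.sub_zero]
    have hmS' : m ≤ ∑ j : Fin (d+2), if s < (j:ℕ) then u' j else 0 := by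
      have heqS : (∑ j : Fin (d+2), if s < (j:ℕ) then u' j else 0)
           = ∑ j : Fin (d+2), if s < (j:ℕ) then u j else 0 := by
        apply Finset.sum_congr rfl
        intro j _
        by_cases hj : s < (j:ℕ)
        · rw [if_pos hj, if_pos hj, hu'app j hj]
        · rw [if_neg hj, if_neg hj]
      rw [heqS]; exact hmS
    obtain ⟨v, hvu', hvP, hvs⟩ := extract (fun j : Fin (d+2) => s < (j:ℕ)) m u' hmS'
    set g0 := Finsupp.single i 1 + v with hg0
    have hwv : wdeg (kw d s a) v = ![(m:ℤ), 0] := by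
      have h1 : wdeg (kw d s a) v = ∑ j ∈ v.support, v j • kw d s a j := rfl
      have h2 : ∀ j ∈ v.support, v j • kw d s a j = v j • ![(1:ℤ), 0] := by
        intro j hj
        rw [kw_gt a j (hvP j (Finsupp.mem_support_iff.1 hj))]
      rw [h1, Finset.sum_congr rfl h2, ← Finset.sum_smul]
      have h3 : ∑ j ∈ v.support, v j = m := hvs
      rw [h3]
      funext j; fin_cases j <;> simp
    have hwg0 : wdeg (kw d s a) g0 = ![(0:ℤ), 1] := by
      rw [hg0, wdeg_add, wdeg_single, hwv]
      by_cases hi : (i:ℕ) < s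
      · rw [kw_lt a i hi]
        have hmc : (m:ℤ) = (a ⟨i, hi⟩ : ℤ) := by rw [hm, dif_pos hi]
        rw [hmc]
        funext j; fin_cases j <;> simp
      · have hieq : (i:ℕ) = s := by omega
        rw [kw_eq a i hieq]
        have hmc : (m:ℤ) = 0 := by rw [hm, dif_neg hi]; simp
        rw [hmc]
        funext j; fin_cases j <;> simp
    have hg0le : g0 ≤ u := by
      rw [Finsupp.le_def]
      intro j
      have hvu'j := Finsupp.le_def.1 hvu' j
      rw [hg0, Finsupp.add_apply]
      rcases eq_or_ne j i with rfl | hne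
      · have hvi : v j = 0 := by
          by_contra hv
          have := hvP j hv
          omega
        rw [Finsupp.single_eq_same, hvi]
        omega
      · rw [Finsupp.single_eq_of_ne' (Ne.symm hne)]
        have h4 : u' j = u j := by
          rw [hu', Finsupp.tsub_apply, Finsupp.single_eq_of_ne' (Ne.symm hne), Nat.sub_zero]
        omega
    have hsplit : (u - g0) + g0 = u := tsub_add_cancel_of_le hg0le
    set u'' := u - g0 with hu''
    have hwu'' : wdeg (kw d s a) u'' = ![(b0:ℤ), (n:ℤ)] := by
      have h5 : wdeg (kw d s a) u'' + wdeg (kw d s a) g0 = ![(b0:ℤ), ((n+1:ℕ):ℤ)] := by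
        rw [← wdeg_add, hsplit, hdeg]
      rw [hwg0] at h5
      funext j
      have h6 := congrFun h5 j
      fin_cases j <;> simp at h6 ⊢ <;> push_cast at h6 ⊢ <;> omega
    obtain ⟨f, g', hf, hg', heq⟩ := ih b0 u'' hwu''
    refine ⟨f, Fin.cons g0 g', hf, ?_, ?_⟩
    · intro q
      refine Fin.cases ?_ ?_ q
      · rw [Fin.cons_zero]; exact hwg0
      · intro q'; rw [Fin.cons_succ]; exact hg' q'
    · rw [Fin.sum_univ_succ]
      simp only [Fin.cons_zero, Fin.cons_succ]
      rw [← hsplit, heq]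
      abel

lemma monomial_prod {σ k ι : Type*} [CommSemiring k] (t : Finset ι) (f : ι → (σ →₀ ℕ)) :
    (monomial (∑ p ∈ t, f p) (1:k)) = ∏ p ∈ t, monomial (f p) 1 := by
  classical
  induction t using Finset.cons_induction with
  | empty => simp
  | cons i t hi ih =>
    rw [Finset.sum_cons, Finset.prod_cons, ← ih, monomial_mul, one_mul]

/-- **Lemma `surjhom` (Kleinschmidt, Picard rank 2).** In the Cox ring
`R = k[z_1,…,z_{d+2}]` of `X_d(a)`: (1) every monomial of degree `(b₁,b₂) ∈ ℕ²` is a product of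
`b₁` monomials of degree `(1,0)` and `b₂` monomials of degree `(0,1)`; (2) consequently, for any
enumerations `e₁`, `e₂` of the monomial bases of `R_{(1,0)}` and `R_{(0,1)}`, the `k`-algebra map
`ψ : Cox(P^nn × P^mm) → R` sending the variables to these monomials hits every `ℕ²`-homogeneous
element of `R`, i.e. `ψ` surjects onto `⊕_{b ∈ ℕ²} R_b`. -/
theorem kleinschmidt_surjhom {k : Type*} [Field k] (d s : ℕ) (hd : 2 ≤ d)
    (hs1 : 1 ≤ s) (hs2 : s ≤ d - 1) (a : Fin s → ℕ) (hmono : Monotone a) :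
    (∀ (b : Fin 2 → ℕ) (u : Fin (d + 2) →₀ ℕ),
      wdeg (kw d s a) u = (fun j => (b j : ℤ)) →
      ∃ (f : Fin (b 0) → (Fin (d + 2) →₀ ℕ)) (g : Fin (b 1) → (Fin (d + 2) →₀ ℕ)),
        (∀ p, wdeg (kw d s a) (f p) = ![(1 : ℤ), 0]) ∧
        (∀ q, wdeg (kw d s a) (g q) = ![(0 : ℤ), 1]) ∧
        u = (∑ p, f p) + ∑ q, g q) ∧
    (∀ (nn mm : ℕ) (e₁ : Fin (nn + 1) → (Fin (d + 2) →₀ ℕ))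
        (e₂ : Fin (mm + 1) → (Fin (d + 2) →₀ ℕ)),
      Function.Injective e₁ →
      Set.range e₁ = {u | wdeg (kw d s a) u = ![(1 : ℤ), 0]} →
      Function.Injective e₂ →
      Set.range e₂ = {u | wdeg (kw d s a) u = ![(0 : ℤ), 1]} →
      ∀ (b : Fin 2 → ℕ) (g : MvPolynomial (Fin (d + 2)) k),
        g.IsWeightedHomogeneous (kw d s a) (fun j => (b j : ℤ)) →
        g ∈ (MvPolynomial.aeval (R := k)
          (Sum.elim (fun p => (monomial (e₁ p) (1 : k)))
            (fun q => (monomial (e₂ q) (1 : k))) :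
            Fin (nn + 1) ⊕ Fin (mm + 1) → MvPolynomial (Fin (d + 2)) k)).range) := by
  have part1 : ∀ (b : Fin 2 → ℕ) (u : Fin (d + 2) →₀ ℕ),
      wdeg (kw d s a) u = (fun j => (b j : ℤ)) →
      ∃ (f : Fin (b 0) → (Fin (d + 2) →₀ ℕ)) (g : Fin (b 1) → (Fin (d + 2) →₀ ℕ)),
        (∀ p, wdeg (kw d s a) (f p) = ![(1 : ℤ), 0]) ∧
        (∀ q, wdeg (kw d s a) (g q) = ![(0 : ℤ), 1]) ∧
        u = (∑ p, f p) + ∑ q, g q := by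
    intro b u hu
    apply decomp d s a (b 1) (b 0) u
    rw [hu]
    funext j
    fin_cases j <;> rfl
  refine ⟨part1, ?_⟩
  intro nn mm e₁ e₂ _ hre₁ _ hre₂ b g hg
  rw [← support_sum_monomial_coeff g]
  apply Subalgebra.sum_mem
  intro u hu
  have hcoeff : coeff u g ≠ 0 := mem_support_iff.1 hu
  have hdeg : wdeg (kw d s a) u = fun j => (b j : ℤ) := by
    have h1 := hg hcoeff
    rw [← h1]
    rfl
  obtain ⟨f, gg, hf, hgg, hsum⟩ := part1 b u hdeg
  have hmono : monomial u (coeff u g) = (coeff u g) •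
      ((∏ p, monomial (f p) (1:k)) * ∏ q, monomial (gg q) (1:k)) := by
    rw [← monomial_prod, ← monomial_prod, monomial_mul, one_mul, ← hsum,
      smul_monomial, smul_eq_mul, mul_one]
  rw [hmono]
  apply Subalgebra.smul_mem
  apply Subalgebra.mul_mem
  · apply Subalgebra.prod_mem
    intro p _
    have hmem : f p ∈ Set.range e₁ := by rw [hre₁]; exact hf p
    obtain ⟨p', hp'⟩ := hmem
    exact (AlgHom.mem_range _).2 ⟨X (Sum.inl p'), by rw [aeval_X]; simp [hp']⟩
  · apply Subalgebra.prod_mem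
    intro q _
    have hmem : gg q ∈ Set.range e₂ := by rw [hre₂]; exact hgg q
    obtain ⟨q', hq'⟩ := hmem
    exact (AlgHom.mem_range _).2 ⟨X (Sum.inr q'), by rw [aeval_X]; simp [hq']⟩


end Gotzmann
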